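/- Let q : [0,∞) → ℝ be continuous with polynomial growth, continuously differentiable on [0, δ] for some δ > 0, and with q(0) = 0. Then lim_{σ → 0⁺} ∫_0^∞ h(σ, x)·q(x) dx = q'(0)/2, where h(σ,x) = x·exp(−(x − σ)²/(2σ))/√(2πσ³). -/

import Mathlib

open Set MeasureTheory Filter

/-- First-passage density to `0` of a Brownian motion with unit negative drift started
at `x`: `h σ x = x exp(-(x-σ)²/(2σ))/√(2πσ³)` for `σ > 0`, and `0` for `σ ≤ 0`. -/
noncomputable def hker (σ x : ℝ) : ℝ :=
  if 0 < σ then x * Real.exp (-(x - σ) ^ 2 / (2 * σ)) / Real.sqrt (2 * Real.pi * σ ^ 3)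
  else 0


lemma aux_int_pow_gauss (n : ℕ) :
    Integrable (fun y : ℝ => y ^ n * Real.exp (-(1/2 : ℝ) * y ^ 2)) := by
  have := integrable_rpow_mul_exp_neg_mul_sq (b := (1/2:ℝ)) (by norm_num)
    (s := (n:ℝ)) (lt_of_lt_of_le neg_one_lt_zero (Nat.cast_nonneg n))
  simpa [Real.rpow_natCast] using this

lemma aux_int_exp_gauss : Integrable (fun y : ℝ => Real.exp (-(1/2 : ℝ) * y ^ 2)) := by
  simpa using aux_int_pow_gauss 0

lemma aux_moment2 :
    ∫ y in Ioi (0:ℝ), y ^ 2 * Real.exp (-(1/2 : ℝ) * y ^ 2)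
      = Real.sqrt (2 * Real.pi) / 2 := by
  have hderiv : ∀ y ∈ Ioi (0:ℝ), HasDerivAt (fun y : ℝ => -y * Real.exp (-(1/2:ℝ) * y ^ 2))
      (y ^ 2 * Real.exp (-(1/2:ℝ) * y ^ 2) - Real.exp (-(1/2:ℝ) * y ^ 2)) y := by
    intro y _
    have h1 : HasDerivAt (fun y : ℝ => -(1/2:ℝ) * y ^ 2) (-y) y := by
      have := (hasDerivAt_pow 2 y).const_mul (-(1/2:ℝ))
      refine this.congr_deriv ?_; push_cast; ring
    have h3 := ((hasDerivAt_id y).neg).mul h1.exp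
    refine h3.congr_deriv ?_; simp only [Pi.neg_apply, id_eq]; ring
  have hcont : ContinuousWithinAt (fun y : ℝ => -y * Real.exp (-(1/2:ℝ) * y ^ 2)) (Ici 0) 0 :=
    (by continuity : Continuous fun y : ℝ => -y * Real.exp (-(1/2:ℝ) * y ^ 2)).continuousWithinAt
  have hint : IntegrableOn (fun y : ℝ =>
      y ^ 2 * Real.exp (-(1/2:ℝ) * y ^ 2) - Real.exp (-(1/2:ℝ) * y ^ 2)) (Ioi 0) :=
    ((aux_int_pow_gauss 2).sub aux_int_exp_gauss).integrableOn
  have htend : Tendsto (fun y : ℝ => -y * Real.exp (-(1/2:ℝ) * y ^ 2)) atTop (nhds 0) := by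
    have hexp : Tendsto (fun x : ℝ => Real.exp (-(1/2:ℝ) * x)) atTop (nhds 0) :=
      Real.tendsto_exp_atBot.comp (tendsto_id.const_mul_atTop_of_neg (by norm_num))
    have hO : (fun y : ℝ => -y * Real.exp (-(1/2:ℝ) * y ^ 2)) =O[atTop]
        fun x : ℝ => Real.exp (-(1/2:ℝ) * x) := by
      have h := (rpow_mul_exp_neg_mul_sq_isLittleO_exp_neg (b := (1/2:ℝ)) (by norm_num) 1).isBigO
      have h2 : (fun x : ℝ => x * Real.exp (-(1/2:ℝ) * x ^ 2)) =O[atTop]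
          fun x : ℝ => Real.exp (-(1/2:ℝ) * x) := by
        refine h.congr' ?_ EventuallyEq.rfl
        filter_upwards [eventually_gt_atTop (0:ℝ)] with y hy
        rw [Real.rpow_one]
      exact h2.neg_left.congr_left (fun y => by ring)
    exact hO.trans_tendsto hexp
  have key := integral_Ioi_of_hasDerivAt_of_tendsto hcont hderiv hint htend
  simp only [neg_zero, zero_mul, sub_zero] at key
  have hsub := integral_sub ((aux_int_pow_gauss 2).integrableOn (s := Ioi 0))
    (aux_int_exp_gauss.integrableOn (s := Ioi 0))
  rw [hsub] at key
  have hg : ∫ y in Ioi (0:ℝ), Real.exp (-(1/2:ℝ) * y ^ 2) = Real.sqrt (2 * Real.pi) / 2 := by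
    have := integral_gaussian_Ioi (1/2 : ℝ)
    rw [this]; congr 1; rw [div_div_eq_mul_div, mul_comm]; norm_num
  rw [hg] at key
  linarith [key]

set_option maxHeartbeats 2000000 in
/-- Short-time asymptotics of the first-passage kernel: for `q`
continuous with polynomial growth, continuously differentiable near `0` and `q 0 = 0`,
`∫_0^∞ h(σ,x) q(x) dx → q'(0)/2` as `σ → 0⁺`. -/
theorem first_passage_kernel_short_time
    (q q1 : ℝ → ℝ) (δ : ℝ) (hδ : 0 < δ)
    (hqcont : ContinuousOn q (Ici 0))
    (K : ℝ) (hK : 0 < K) (d : ℕ)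
    (hpoly : ∀ x : ℝ, 0 ≤ x → |q x| ≤ K * (1 + x ^ d))
    (hd1 : ∀ x ∈ Icc (0 : ℝ) δ, HasDerivWithinAt q (q1 x) (Icc 0 δ) x)
    (hq1cont : ContinuousOn q1 (Icc 0 δ))
    (hq0 : q 0 = 0) :
    Tendsto (fun σ => ∫ x in Ioi (0 : ℝ), hker σ x * q x)
      (nhdsWithin 0 (Ioi 0)) (nhds (q1 0 / 2)) := by
  have h2pi : 0 < Real.sqrt (2 * Real.pi) := Real.sqrt_pos.2 (by positivity)
  -- the quotient function r
  have hQcont : Continuous (fun x : ℝ => q (max x 0)) :=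
    hqcont.comp_continuous (continuous_id.max continuous_const) (fun x => le_max_right x 0)
  obtain ⟨r, hrdef⟩ : ∃ r : ℝ → ℝ, r = fun x => if x ≤ 0 then q1 0 else q (max x 0) / x :=
    ⟨_, rfl⟩
  have hrx : ∀ x : ℝ, 0 < x → r x = q x / x := by
    intro x hx
    rw [hrdef]
    simp only [if_neg (not_le.2 hx), max_eq_left hx.le]
  have hrmeas : Measurable r := by
    rw [hrdef]
    exact Measurable.ite measurableSet_Iic measurable_const
      (hQcont.measurable.div measurable_id)
  -- bound on r
  obtain ⟨M0, hM0⟩ :=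
    (isCompact_Icc : IsCompact (Icc (0:ℝ) δ)).exists_bound_of_continuousOn hq1cont
  obtain ⟨M, hMdef⟩ : ∃ M : ℝ, M = max M0 0 := ⟨_, rfl⟩
  have hMnn : 0 ≤ M := hMdef ▸ le_max_right _ _
  have hq_lip : ∀ x ∈ Icc (0:ℝ) δ, |q x| ≤ M * x := by
    intro x hx
    have h := Convex.norm_image_sub_le_of_norm_hasDerivWithin_le (C := M) hd1
      (fun z hz => le_trans (hM0 z hz) (hMdef ▸ le_max_left _ _)) (convex_Icc _ _)
      (left_mem_Icc.2 hδ.le) hx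
    simpa [hq0, Real.norm_eq_abs, abs_of_nonneg hx.1] using h
  obtain ⟨C, hC⟩ : ∃ C : ℝ, C = M + K / δ := ⟨_, rfl⟩
  have hKδ : 0 < K / δ := div_pos hK hδ
  have hCpos : 0 < C := by rw [hC]; linarith
  have hrbound : ∀ x : ℝ, 0 < x → |r x| ≤ C * (1 + x ^ d) := by
    intro x hx
    rw [hrx x hx, abs_div, abs_of_pos hx]
    have hxd : (0:ℝ) ≤ x ^ d := pow_nonneg hx.le d
    rcases le_total x δ with h | h
    · have h1 := hq_lip x ⟨hx.le, h⟩
      have h2 : |q x| / x ≤ M := by rw [div_le_iff₀ hx]; linarith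
      calc |q x| / x ≤ M := h2
        _ ≤ C * (1 + x ^ d) := by rw [hC]; nlinarith
    · have h1 := hpoly x hx.le
      have h2 : |q x| / x ≤ K * (1 + x ^ d) / δ := by
        rw [div_le_div_iff₀ hx hδ]
        have hKx : 0 ≤ K * (1 + x ^ d) := by positivity
        nlinarith
      calc |q x| / x ≤ K * (1 + x ^ d) / δ := h2
        _ = K / δ * (1 + x ^ d) := by ring
        _ ≤ C * (1 + x ^ d) := by rw [hC]; nlinarith
  -- limit of r at 0⁺
  have hr0 : Tendsto r (nhdsWithin 0 (Ioi 0)) (nhds (q1 0)) := by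
    have h0 := hd1 0 (left_mem_Icc.2 hδ.le)
    rw [hasDerivWithinAt_iff_tendsto_slope] at h0
    have hset : Icc (0:ℝ) δ \ {0} = Ioc 0 δ := by
      ext x
      simp only [mem_diff, mem_Icc, mem_singleton_iff, mem_Ioc]
      constructor
      · rintro ⟨⟨h1, h2⟩, h3⟩; exact ⟨lt_of_le_of_ne h1 (Ne.symm h3), h2⟩
      · rintro ⟨h1, h2⟩; exact ⟨⟨h1.le, h2⟩, ne_of_gt h1⟩
    rw [hset, nhdsWithin_Ioc_eq_nhdsGT hδ] at h0
    refine h0.congr' ?_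
    filter_upwards [self_mem_nhdsWithin] with x hx
    rw [hrx x hx]
    simp [slope_def_field, hq0]
  -- the transformed integrand
  obtain ⟨E, hE⟩ : ∃ E : ℝ → ℝ,
      E = fun y => Real.exp (-(1/2:ℝ) * y ^ 2) / Real.sqrt (2 * Real.pi) := ⟨_, rfl⟩
  have hEcont : Continuous E := by rw [hE]; fun_prop
  have hEnn : ∀ y, 0 ≤ E y := fun y => by rw [hE]; positivity
  obtain ⟨g, hgdef⟩ : ∃ g : ℝ → ℝ → ℝ,
      g = fun σ y => (y + Real.sqrt σ) ^ 2 * r (Real.sqrt σ * y + σ) * E y := ⟨_, rfl⟩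
  obtain ⟨G, hGdef⟩ : ∃ G : ℝ → ℝ → ℝ,
      G = fun σ => (Ioi (-Real.sqrt σ)).indicator (g σ) := ⟨_, rfl⟩
  have hGmem : ∀ σ : ℝ, ∀ y ∈ Ioi (-Real.sqrt σ), G σ y = g σ y := by
    intro σ y hy; rw [hGdef]; exact indicator_of_mem hy _
  have hGnmem : ∀ σ : ℝ, ∀ y : ℝ, y ∉ Ioi (-Real.sqrt σ) → G σ y = 0 := by
    intro σ y hy; rw [hGdef]; exact indicator_of_notMem hy _
  -- change of variables
  have key : ∀ σ : ℝ, 0 < σ → (∫ y, G σ y) = ∫ x in Ioi (0:ℝ), hker σ x * q x := by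
    intro σ hσ
    have hs0 : 0 < Real.sqrt σ := Real.sqrt_pos.2 hσ
    obtain ⟨s, hsdef⟩ : ∃ s : ℝ, s = Real.sqrt σ := ⟨_, rfl⟩
    rw [← hsdef] at hs0
    have hsq : s ^ 2 = σ := by rw [hsdef]; exact Real.sq_sqrt hσ.le
    obtain ⟨F, hF⟩ : ∃ F : ℝ → ℝ,
        F = fun x => (Ioi (0:ℝ)).indicator (fun x => hker σ x * q x) x := ⟨_, rfl⟩
    have heq : ∀ y : ℝ, G σ y = s • F (s * y + σ) := by
      intro y
      by_cases hy : -s < y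
      · have hx0 : 0 < s * y + σ := by nlinarith
        rw [hGmem σ y (by rw [← hsdef]; exact hy)]
        simp only [hgdef, hF]
        rw [indicator_of_mem (mem_Ioi.2 hx0), ← hsdef]
        simp only [hker, if_pos hσ]
        rw [hrx _ hx0, hE]
        have hexp : -(s * y + σ - σ) ^ 2 / (2 * σ) = -(1/2:ℝ) * y ^ 2 := by
          have h1 : (s * y + σ - σ) ^ 2 = σ * y ^ 2 := by rw [← hsq]; ring
          rw [h1]; field_simp
        rw [hexp]
        have hsqrt3 : Real.sqrt (2 * Real.pi * σ ^ 3) = Real.sqrt (2 * Real.pi) * s ^ 3 := by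
          rw [Real.sqrt_mul (by positivity), ← hsq,
            show ((s ^ 2) ^ 3 : ℝ) = (s ^ 3) ^ 2 by ring, Real.sqrt_sq (by positivity)]
        rw [hsqrt3]
        have hxx : s * y + σ = s * (y + s) := by rw [← hsq]; ring
        rw [smul_eq_mul, hxx]
        have hys : 0 < y + s := by nlinarith
        field_simp
      · push_neg at hy
        have hx0 : s * y + σ ≤ 0 := by nlinarith
        rw [hGnmem σ y (by rw [← hsdef]; simpa using hy)]
        simp only [hF]
        rw [indicator_of_notMem (by simpa using hx0)]
        simp
    calc ∫ y, G σ y = ∫ y, s • F (s * y + σ) := by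
          exact integral_congr_ae (Eventually.of_forall heq)
      _ = s • ∫ y, F (s * y + σ) := integral_smul _ _
      _ = s • ∫ y, (fun t => F (t + σ)) (s * y) := rfl
      _ = s • (|s⁻¹| • ∫ t, F (t + σ)) := by
          rw [MeasureTheory.Measure.integral_comp_mul_left (fun t => F (t + σ)) s]
      _ = s • (|s⁻¹| • ∫ t, F t) := by rw [integral_add_right_eq_self]
      _ = ∫ t, F t := by
          rw [abs_of_pos (inv_pos.2 hs0), smul_smul, mul_inv_cancel₀ hs0.ne', one_smul]
      _ = ∫ x in Ioi (0:ℝ), hker σ x * q x := by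
          rw [hF, integral_indicator measurableSet_Ioi]
  -- measurability
  have hGmeas : ∀ σ : ℝ, AEStronglyMeasurable (G σ) volume := by
    intro σ
    rw [hGdef, hgdef]
    refine (Measurable.indicator ?_ measurableSet_Ioi).aestronglyMeasurable
    exact (((measurable_id.add_const _).pow_const 2).mul
      (hrmeas.comp ((measurable_const.mul measurable_id).add_const σ))).mul hEcont.measurable
  -- the dominating function
  obtain ⟨m, hm⟩ : ∃ m : ℕ, m = 2 * d + 4 := ⟨_, rfl⟩
  have hmeven : Even m := by rw [hm]; exact ⟨d + 2, by ring⟩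
  have hym : ∀ y : ℝ, 0 ≤ y ^ m := fun y => hmeven.pow_nonneg y
  obtain ⟨C5, hC5⟩ : ∃ C5 : ℝ,
      C5 = 2 * C * 2 ^ (d + 2) * 2 ^ (d + 2) / Real.sqrt (2 * Real.pi) := ⟨_, rfl⟩
  have hC5nn : 0 ≤ C5 := by rw [hC5]; positivity
  obtain ⟨bound, hbd⟩ : ∃ bound : ℝ → ℝ,
      bound = fun y => C5 * ((1 + y ^ m) * Real.exp (-(1/2:ℝ) * y ^ 2)) := ⟨_, rfl⟩
  have hbound_int : Integrable bound := by
    have h1 : Integrable (fun y : ℝ => (1 + y ^ m) * Real.exp (-(1/2:ℝ) * y ^ 2)) := by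
      have := (aux_int_pow_gauss 0).add (aux_int_pow_gauss m)
      simpa [add_mul, Pi.add_def] using this
    rw [hbd]
    exact h1.const_mul C5
  -- the uniform bound
  have hGbound : ∀ σ ∈ Ioc (0:ℝ) 1, ∀ y : ℝ, |G σ y| ≤ bound y := by
    intro σ hσ y
    have hbnn : 0 ≤ bound y := by
      rw [hbd]
      have := hym y
      positivity
    by_cases hy : y ∈ Ioi (-Real.sqrt σ)
    · rw [hGmem σ y hy]
      simp only [hgdef]
      obtain ⟨s, hsdef⟩ : ∃ s : ℝ, s = Real.sqrt σ := ⟨_, rfl⟩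
      rw [← hsdef]
      have hs0 : 0 < s := hsdef ▸ Real.sqrt_pos.2 hσ.1
      have hsq : s ^ 2 = σ := by rw [hsdef]; exact Real.sq_sqrt hσ.1.le
      have hs1 : s ≤ 1 := by
        rw [hsdef, show (1:ℝ) = Real.sqrt 1 by rw [Real.sqrt_one]]
        exact Real.sqrt_le_sqrt hσ.2
      have hys : -s < y := hsdef ▸ hy
      have hx0 : 0 < s * y + σ := by nlinarith
      have hxle : s * y + σ ≤ |y| + 1 := by
        have h1 : s * y ≤ s * |y| := mul_le_mul_of_nonneg_left (le_abs_self y) hs0.le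
        have h2 : s * |y| ≤ |y| := by nlinarith [abs_nonneg y]
        have h3 : σ ≤ 1 := hσ.2
        linarith
      have t1 : (1:ℝ) ≤ |y| + 1 := by nlinarith [abs_nonneg y]
      have h1 : (y + s) ^ 2 ≤ (|y| + 1) ^ 2 := by
        nlinarith [le_abs_self y, neg_abs_le y]
      have h2 : |r (s * y + σ)| ≤ C * (1 + (|y| + 1) ^ d) := by
        refine le_trans (hrbound _ hx0) ?_
        have hp : (s * y + σ) ^ d ≤ (|y| + 1) ^ d := pow_le_pow_left₀ hx0.le hxle d
        nlinarith
      have habs : |(y + s) ^ 2 * r (s * y + σ) * E y| = (y + s) ^ 2 * |r (s * y + σ)| * E y := by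
        rw [abs_mul, abs_mul, abs_of_nonneg (sq_nonneg _), abs_of_nonneg (hEnn y)]
      rw [habs]
      have step1 : (y + s) ^ 2 * |r (s * y + σ)| * E y
          ≤ (|y| + 1) ^ 2 * (C * (1 + (|y| + 1) ^ d)) * E y := by
        have hEy := hEnn y
        have hra := abs_nonneg (r (s * y + σ))
        have hnn2 : (0:ℝ) ≤ (|y| + 1) ^ 2 := by positivity
        nlinarith [mul_le_mul h1 h2 (abs_nonneg _) hnn2]
      refine le_trans step1 ?_
      have e0 : (1:ℝ) ≤ (|y| + 1) ^ d := by
        calc (1:ℝ) = 1 ^ d := (one_pow d).symm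
          _ ≤ (|y| + 1) ^ d := pow_le_pow_left₀ zero_le_one t1 d
      have e1 : (|y| + 1) ^ 2 * (C * (1 + (|y| + 1) ^ d)) ≤ C * (2 * (|y| + 1) ^ (d + 2)) := by
        have hp2 : (0:ℝ) < (|y| + 1) ^ 2 := by positivity
        have hmul : (|y| + 1) ^ 2 * (|y| + 1) ^ d = (|y| + 1) ^ (d + 2) := by
          rw [← pow_add]; ring_nf
        have hle2 : ((|y| + 1):ℝ) ^ 2 ≤ (|y| + 1) ^ (d + 2) :=
          pow_le_pow_right₀ t1 (by omega)
        nlinarith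
      have e2 : ((|y| + 1):ℝ) ^ (d + 2) ≤ ((|y| + 1) ^ 2) ^ (d + 2) := by
        rw [← pow_mul]
        exact pow_le_pow_right₀ t1 (by omega)
      have e3 : ((|y| + 1):ℝ) ^ 2 ≤ 2 * (1 + y ^ 2) := by
        nlinarith [sq_abs y, sq_nonneg (|y| - 1)]
      have e4 : (((|y| + 1):ℝ) ^ 2) ^ (d + 2) ≤ (2 * (1 + y ^ 2)) ^ (d + 2) :=
        pow_le_pow_left₀ (by positivity) e3 _
      have e5 : ((2:ℝ) * (1 + y ^ 2)) ^ (d + 2) = 2 ^ (d + 2) * (1 + y ^ 2) ^ (d + 2) :=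
        mul_pow _ _ _
      have h2pow : (0:ℝ) < 2 ^ (d + 2) := by positivity
      have e6 : ((1:ℝ) + y ^ 2) ^ (d + 2) ≤ 2 ^ (d + 2) * (1 + y ^ m) := by
        rcases le_total (y ^ 2) 1 with h | h
        · have hA : ((1:ℝ) + y ^ 2) ^ (d + 2) ≤ 2 ^ (d + 2) :=
            pow_le_pow_left₀ (by positivity) (by linarith) _
          nlinarith [hym y]
        · have hA : ((1:ℝ) + y ^ 2) ^ (d + 2) ≤ (2 * y ^ 2) ^ (d + 2) :=
            pow_le_pow_left₀ (by positivity) (by linarith) _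
          have hB : ((2:ℝ) * y ^ 2) ^ (d + 2) = 2 ^ (d + 2) * y ^ m := by
            rw [mul_pow, ← pow_mul, hm]; ring_nf
          nlinarith
      have echain : ((|y| + 1):ℝ) ^ (d + 2) ≤ 2 ^ (d + 2) * (2 ^ (d + 2) * (1 + y ^ m)) := by
        calc ((|y| + 1):ℝ) ^ (d + 2) ≤ ((|y| + 1) ^ 2) ^ (d + 2) := e2
          _ ≤ (2 * (1 + y ^ 2)) ^ (d + 2) := e4
          _ = 2 ^ (d + 2) * (1 + y ^ 2) ^ (d + 2) := e5
          _ ≤ 2 ^ (d + 2) * (2 ^ (d + 2) * (1 + y ^ m)) := by nlinarith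
      have efinal : (|y| + 1) ^ 2 * (C * (1 + (|y| + 1) ^ d))
          ≤ 2 * C * 2 ^ (d + 2) * 2 ^ (d + 2) * (1 + y ^ m) := by
        refine le_trans e1 ?_
        nlinarith
      calc (|y| + 1) ^ 2 * (C * (1 + (|y| + 1) ^ d)) * E y
          ≤ (2 * C * 2 ^ (d + 2) * 2 ^ (d + 2) * (1 + y ^ m)) * E y := by
            have hEy := hEnn y
            nlinarith
        _ = bound y := by rw [hbd, hE, hC5]; field_simp
    · rw [hGnmem σ y hy]
      simpa using hbnn
  -- pointwise limits
  have hsqrt0 : Tendsto (fun σ : ℝ => Real.sqrt σ) (nhdsWithin 0 (Ioi 0)) (nhds 0) := by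
    have := (Real.continuous_sqrt.tendsto 0).mono_left (nhdsWithin_le_nhds (s := Ioi (0:ℝ)))
    simpa using this
  obtain ⟨flim, hflim⟩ : ∃ flim : ℝ → ℝ,
      flim = fun y => (Ioi (0:ℝ)).indicator (fun y => y ^ 2 * q1 0 * E y) y := ⟨_, rfl⟩
  have hlim : ∀ y : ℝ, y ≠ 0 →
      Tendsto (fun σ => G σ y) (nhdsWithin 0 (Ioi 0)) (nhds (flim y)) := by
    intro y hy
    rcases hy.lt_or_gt with hneg | hpos
    · have h0 : flim y = 0 := by
        rw [hflim]; exact indicator_of_notMem (by simpa using hneg.le) _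
      rw [h0]
      refine Tendsto.congr' ?_ tendsto_const_nhds
      filter_upwards [Ioo_mem_nhdsGT_of_mem
        (show (0:ℝ) ∈ Ico (0:ℝ) (y ^ 2) from ⟨le_rfl, by positivity⟩)] with σ hσ
      have hle : y ≤ -Real.sqrt σ := by
        have h1 : Real.sqrt σ < -y := by
          have h2 := Real.sqrt_lt_sqrt hσ.1.le hσ.2
          rwa [Real.sqrt_sq_eq_abs, abs_of_neg hneg] at h2
        linarith
      exact (hGnmem σ y (by simpa using hle)).symm
    · have h0 : flim y = y ^ 2 * q1 0 * E y := by
        rw [hflim]; exact indicator_of_mem (mem_Ioi.2 hpos) _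
      rw [h0]
      have harg : Tendsto (fun σ : ℝ => Real.sqrt σ * y + σ)
          (nhdsWithin 0 (Ioi 0)) (nhdsWithin 0 (Ioi 0)) := by
        rw [tendsto_nhdsWithin_iff]
        constructor
        · have hid : Tendsto (fun σ : ℝ => σ) (nhdsWithin (0:ℝ) (Ioi 0)) (nhds 0) :=
            tendsto_id.mono_left nhdsWithin_le_nhds
          have := (hsqrt0.mul_const y).add hid
          simpa using this
        · filter_upwards [self_mem_nhdsWithin] with σ hσ
          have hσ0 : (0:ℝ) < σ := hσ
          have hnn : 0 ≤ Real.sqrt σ * y := mul_nonneg (Real.sqrt_nonneg σ) hpos.le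
          exact mem_Ioi.2 (by linarith)
      have hrlim : Tendsto (fun σ : ℝ => r (Real.sqrt σ * y + σ))
          (nhdsWithin 0 (Ioi 0)) (nhds (q1 0)) := hr0.comp harg
      have hmain : Tendsto (fun σ : ℝ => g σ y) (nhdsWithin 0 (Ioi 0))
          (nhds (y ^ 2 * q1 0 * E y)) := by
        rw [hgdef]
        have h1 : Tendsto (fun σ : ℝ => (y + Real.sqrt σ) ^ 2)
            (nhdsWithin 0 (Ioi 0)) (nhds (y ^ 2)) := by
          have h2 := ((tendsto_const_nhds (x := y)
            (f := nhdsWithin (0:ℝ) (Ioi 0))).add hsqrt0).pow 2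
          simpa using h2
        exact (h1.mul hrlim).mul tendsto_const_nhds
      refine Tendsto.congr' ?_ hmain
      filter_upwards [self_mem_nhdsWithin] with σ hσ
      have hσ0 : (0:ℝ) < σ := hσ
      have hmem : y ∈ Ioi (-Real.sqrt σ) := by
        simp only [mem_Ioi]
        have := Real.sqrt_pos.2 hσ0
        linarith
      exact (hGmem σ y hmem).symm
  -- value of the limit integral
  have hfl_int : ∫ y, flim y = q1 0 / 2 := by
    rw [hflim, integral_indicator measurableSet_Ioi]
    have hcongr : ∀ y : ℝ, y ^ 2 * q1 0 * E y
        = (q1 0 / Real.sqrt (2 * Real.pi)) * (y ^ 2 * Real.exp (-(1/2:ℝ) * y ^ 2)) := by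
      intro y; rw [hE]; field_simp
    calc ∫ y in Ioi (0:ℝ), y ^ 2 * q1 0 * E y
        = ∫ y in Ioi (0:ℝ), (q1 0 / Real.sqrt (2 * Real.pi))
            * (y ^ 2 * Real.exp (-(1/2:ℝ) * y ^ 2)) :=
          integral_congr_ae (Eventually.of_forall fun y => hcongr y)
      _ = (q1 0 / Real.sqrt (2 * Real.pi))
            * ∫ y in Ioi (0:ℝ), y ^ 2 * Real.exp (-(1/2:ℝ) * y ^ 2) := by
          rw [integral_const_mul]
      _ = q1 0 / 2 := by
          rw [aux_moment2]; field_simp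
  -- assemble
  have main : Tendsto (fun σ => ∫ y, G σ y) (nhdsWithin 0 (Ioi 0)) (nhds (∫ y, flim y)) := by
    refine tendsto_integral_filter_of_dominated_convergence bound
      (Eventually.of_forall hGmeas) ?_ hbound_int ?_
    · filter_upwards [Ioc_mem_nhdsGT_of_mem
        (show (0:ℝ) ∈ Ico (0:ℝ) 1 from ⟨le_rfl, one_pos⟩)] with σ hσ
      exact Eventually.of_forall fun y => by
        rw [Real.norm_eq_abs]; exact hGbound σ hσ y
    · have hae : ∀ᵐ y : ℝ, y ≠ 0 := by
        refine eventually_of_mem (U := {(0:ℝ)}ᶜ) (compl_mem_ae_iff.2 ?_) (fun y hy => hy)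
        simp
      filter_upwards [hae] with y hy using hlim y hy
  rw [← hfl_int]
  refine Tendsto.congr' ?_ main
  filter_upwards [self_mem_nhdsWithin] with σ hσ
  exact key σ hσ
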